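/- Let 0 < a < b, α > 0, ρ > 0, and let f : [a,b] → ℝ be convex and integrable, and F(x) = f(x) + f(a+b−x). Then F((a+b)/2) ≤ (ρ^α Γ(α+1)/(b^ρ − a^ρ)^α) · ^ρI^α_{a+}F(b). -/

import Mathlib

open MeasureTheory intervalIntegral Real

theorem katugampola_hh_F_left (a b α ρ : ℝ) (ha : 0 < a) (hab : a < b)
    (hα : 0 < α) (hρ : 0 < ρ) (f F : ℝ → ℝ)
    (hconv : ConvexOn ℝ (Set.Icc a b) f)
    (hint : IntervalIntegrable f volume a b)
    (hF : ∀ x, F x = f x + f (a + b - x)) :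
    F ((a + b) / 2) ≤
      (ρ ^ α * Real.Gamma (α + 1) / (b ^ ρ - a ^ ρ) ^ α) *
        ((ρ ^ (1 - α) / Real.Gamma α) *
          ∫ t in a..b, t ^ (ρ - 1) * (b ^ ρ - t ^ ρ) ^ (α - 1) * F t) := by
  have hb : 0 < b := ha.trans hab
  set m : ℝ := (a + b) / 2 with hm
  set w : ℝ → ℝ := fun t => t ^ (ρ - 1) * (b ^ ρ - t ^ ρ) ^ (α - 1) with hw
  have hD : a ^ ρ < b ^ ρ := Real.rpow_lt_rpow ha.le hab hρ
  have hDpos : (0:ℝ) < (b ^ ρ - a ^ ρ) ^ α := Real.rpow_pos_of_pos (by linarith) α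
  -- w is nonneg on Icc a b
  have hwnonneg : ∀ t ∈ Set.Icc a b, 0 ≤ w t := by
    intro t ht
    have h1 : (0:ℝ) < t := ha.trans_le ht.1
    have h2 : t ^ ρ ≤ b ^ ρ := Real.rpow_le_rpow h1.le ht.2 hρ.le
    exact mul_nonneg (Real.rpow_nonneg h1.le _) (Real.rpow_nonneg (by linarith) _)
  -- F t ≥ F m on Icc a b
  have hFlb : ∀ t ∈ Set.Icc a b, F m ≤ F t := by
    intro t ht
    have ht' : a + b - t ∈ Set.Icc a b := ⟨by linarith [ht.2], by linarith [ht.1]⟩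
    have hkey := hconv.2 ht ht' (by norm_num : (0:ℝ) ≤ 1/2) (by norm_num : (0:ℝ) ≤ 1/2)
      (by norm_num)
    have hmid : (1/2 : ℝ) • t + (1/2 : ℝ) • (a + b - t) = m := by
      simp only [smul_eq_mul, hm]; ring
    rw [hmid, smul_eq_mul, smul_eq_mul] at hkey
    have hFm : F m = 2 * f m := by
      rw [hF]
      have : a + b - m = m := by rw [hm]; ring
      rw [this]; ring
    rw [hFm, hF t]; linarith
  -- F is bounded on Icc a b
  have hMub : ∀ t ∈ Set.Icc a b, f t ≤ max (f a) (f b) := by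
    intro t ht
    exact hconv.le_on_segment (Set.left_mem_Icc.2 hab.le) (Set.right_mem_Icc.2 hab.le)
      ((segment_eq_Icc hab.le) ▸ ht)
  set C : ℝ := |F m| + |2 * max (f a) (f b)| with hC
  have hFbdd : ∀ t ∈ Set.Icc a b, |F t| ≤ C := by
    intro t ht
    have ht' : a + b - t ∈ Set.Icc a b := ⟨by linarith [ht.2], by linarith [ht.1]⟩
    have h1 : F t ≤ 2 * max (f a) (f b) := by
      rw [hF]; linarith [hMub t ht, hMub _ ht']
    have h2 : F m ≤ F t := hFlb t ht
    rw [abs_le]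
    constructor
    · have := neg_abs_le (F m); linarith [abs_nonneg (2 * max (f a) (f b))]
    · have := le_abs_self (2 * max (f a) (f b)); linarith [abs_nonneg (F m)]
  -- change of variables setup
  have hderiv : ∀ t ∈ Set.Icc a b,
      HasDerivWithinAt (fun t : ℝ => t ^ ρ) (ρ * t ^ (ρ - 1)) (Set.Icc a b) t := by
    intro t ht
    exact (Real.hasDerivAt_rpow_const (Or.inl (ha.trans_le ht.1).ne')).hasDerivWithinAt
  have hinj : Set.InjOn (fun t : ℝ => t ^ ρ) (Set.Icc a b) := by
    intro x hx y hy hxy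
    by_contra hne
    rcases lt_or_gt_of_ne hne with h | h
    · exact absurd hxy (Real.rpow_lt_rpow (ha.trans_le hx.1).le h hρ).ne
    · exact absurd hxy.symm (Real.rpow_lt_rpow (ha.trans_le hy.1).le h hρ).ne
  have himg : (fun t : ℝ => t ^ ρ) '' Set.Icc a b = Set.Icc (a ^ ρ) (b ^ ρ) := by
    ext u
    constructor
    · rintro ⟨t, ht, rfl⟩
      exact ⟨Real.rpow_le_rpow ha.le ht.1 hρ.le,
        Real.rpow_le_rpow (ha.le.trans ht.1) ht.2 hρ.le⟩
    · rintro ⟨h1, h2⟩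
      have hu : (0:ℝ) < u := (Real.rpow_pos_of_pos ha ρ).trans_le h1
      refine ⟨u ^ ρ⁻¹, ⟨?_, ?_⟩, ?_⟩
      · have := Real.rpow_le_rpow (Real.rpow_pos_of_pos ha ρ).le h1 (inv_pos.2 hρ).le
        rwa [Real.rpow_rpow_inv ha.le hρ.ne'] at this
      · have := Real.rpow_le_rpow hu.le h2 (inv_pos.2 hρ).le
        rwa [Real.rpow_rpow_inv hb.le hρ.ne'] at this
      · exact Real.rpow_inv_rpow hu.le hρ.ne'
  -- the weight after change of variables
  set g : ℝ → ℝ := fun u => (b ^ ρ - u) ^ (α - 1) with hg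
  have hgint : IntegrableOn g (Set.Icc (a ^ ρ) (b ^ ρ)) volume := by
    have h1 : IntervalIntegrable (fun s : ℝ => s ^ (α - 1)) volume 0 (b ^ ρ - a ^ ρ) :=
      intervalIntegral.intervalIntegrable_rpow' (by linarith)
    have h2 := h1.comp_sub_left (b ^ ρ)
    simp only [sub_sub_cancel, sub_zero] at h2
    rw [integrableOn_Icc_iff_integrableOn_Ioc]
    exact h2.symm.1
  -- the pointwise change-of-variables identity
  have hWeq : ∀ t ∈ Set.Icc a b, |ρ * t ^ (ρ - 1)| • g (t ^ ρ) = ρ * w t := by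
    intro t ht
    have h1 : (0:ℝ) < t := ha.trans_le ht.1
    have : |ρ * t ^ (ρ - 1)| = ρ * t ^ (ρ - 1) :=
      abs_of_nonneg (mul_nonneg hρ.le (Real.rpow_nonneg h1.le _))
    rw [smul_eq_mul, this, hg, hw]; ring
  -- integrability of w on Icc a b
  have hWint : IntegrableOn (fun t => |ρ * t ^ (ρ - 1)| • g (t ^ ρ)) (Set.Icc a b) volume := by
    rw [← MeasureTheory.integrableOn_image_iff_integrableOn_abs_deriv_smul
      measurableSet_Icc hderiv hinj g]
    rwa [himg]
  have hwint : IntegrableOn w (Set.Icc a b) volume := by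
    have h2 : IntegrableOn (fun t => ρ⁻¹ * (|ρ * t ^ (ρ - 1)| • g (t ^ ρ)))
        (Set.Icc a b) volume := hWint.const_mul ρ⁻¹
    refine h2.congr_fun (fun t ht => ?_) measurableSet_Icc
    dsimp only; rw [hWeq t ht]; field_simp
  -- value of ∫ w
  have hIw : ∫ t in Set.Icc a b, w t = (b ^ ρ - a ^ ρ) ^ α / (ρ * α) := by
    have hcov := MeasureTheory.integral_image_eq_integral_abs_deriv_smul
      measurableSet_Icc hderiv hinj g
    rw [himg] at hcov
    have hL : ∫ u in Set.Icc (a ^ ρ) (b ^ ρ), g u = (b ^ ρ - a ^ ρ) ^ α / α := by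
      rw [MeasureTheory.integral_Icc_eq_integral_Ioc,
        ← intervalIntegral.integral_of_le hD.le]
      have := intervalIntegral.integral_comp_sub_left (a := a ^ ρ) (b := b ^ ρ)
        (fun s : ℝ => s ^ (α - 1)) (b ^ ρ)
      rw [hg]
      rw [this, sub_self]
      have hα1 : α - 1 + 1 = α := by ring
      rw [integral_rpow (Or.inl (by linarith)), hα1, Real.zero_rpow hα.ne']
      ring
    have hR : ∫ t in Set.Icc a b, |ρ * t ^ (ρ - 1)| • g (t ^ ρ)
        = ρ * ∫ t in Set.Icc a b, w t := by
      rw [← MeasureTheory.integral_const_mul]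
      exact MeasureTheory.setIntegral_congr_fun measurableSet_Icc (fun t ht => hWeq t ht)
    rw [hL, hR] at hcov
    field_simp at hcov ⊢
    linarith [hcov]
  -- integrability of F on Icc a b
  have hFint : IntegrableOn F (Set.Icc a b) volume := by
    have h1 := hint.comp_sub_left (a + b)
    simp only [add_sub_cancel_right, add_sub_cancel_left] at h1
    have h2 : IntervalIntegrable (fun x => f x + f (a + b - x)) volume a b := hint.add h1.symm
    have h3 : IntervalIntegrable F volume a b := by
      have : F = fun x => f x + f (a + b - x) := funext hF
      rwa [this]
    rw [integrableOn_Icc_iff_integrableOn_Ioc]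
    exact h3.1
  -- integrability of w * F on Icc a b
  have hwFint : IntegrableOn (fun t => w t * F t) (Set.Icc a b) volume := by
    apply MeasureTheory.Integrable.mono' (hwint.const_mul C)
    · exact hwint.aestronglyMeasurable.mul hFint.aestronglyMeasurable
    · refine Filter.eventually_of_mem (self_mem_ae_restrict measurableSet_Icc) ?_
      intro t ht
      rw [Real.norm_eq_abs, abs_mul, abs_of_nonneg (hwnonneg t ht)]
      calc w t * |F t| ≤ w t * C := by
            apply mul_le_mul_of_nonneg_left (hFbdd t ht) (hwnonneg t ht)
        _ = C * w t := mul_comm _ _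
  -- main inequality on set integrals
  have hmono : ∫ t in Set.Icc a b, F m * w t ≤ ∫ t in Set.Icc a b, w t * F t := by
    apply MeasureTheory.setIntegral_mono_on (hwint.const_mul (F m)) hwFint measurableSet_Icc
    intro t ht
    rw [mul_comm (F m) (w t)]
    exact mul_le_mul_of_nonneg_left (hFlb t ht) (hwnonneg t ht)
  rw [MeasureTheory.integral_const_mul, hIw] at hmono
  -- relate the interval integral in the goal to the set integral
  have hIeq : (∫ t in a..b, t ^ (ρ - 1) * (b ^ ρ - t ^ ρ) ^ (α - 1) * F t)
      = ∫ t in Set.Icc a b, w t * F t := by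
    rw [intervalIntegral.integral_of_le hab.le, MeasureTheory.integral_Icc_eq_integral_Ioc]
  rw [hIeq]
  -- final algebra
  have hΓ : Real.Gamma (α + 1) = α * Real.Gamma α := Real.Gamma_add_one hα.ne'
  have hΓpos : 0 < Real.Gamma α := Real.Gamma_pos_of_pos hα
  have hK : (ρ ^ α * Real.Gamma (α + 1) / (b ^ ρ - a ^ ρ) ^ α) * (ρ ^ (1 - α) / Real.Gamma α)
      = ρ * α / (b ^ ρ - a ^ ρ) ^ α := by
    have hρρ : ρ ^ α * ρ ^ (1 - α) = ρ := by
      rw [← Real.rpow_add hρ]; norm_num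
    rw [hΓ]
    field_simp
    linear_combination hρρ
  have hKpos : 0 < ρ * α / (b ^ ρ - a ^ ρ) ^ α := by positivity
  calc F m = (ρ * α / (b ^ ρ - a ^ ρ) ^ α) * (F m * ((b ^ ρ - a ^ ρ) ^ α / (ρ * α))) := by
        field_simp
    _ ≤ (ρ * α / (b ^ ρ - a ^ ρ) ^ α) * ∫ t in Set.Icc a b, w t * F t :=
        mul_le_mul_of_nonneg_left hmono hKpos.le
    _ = (ρ ^ α * Real.Gamma (α + 1) / (b ^ ρ - a ^ ρ) ^ α) *
        ((ρ ^ (1 - α) / Real.Gamma α) * ∫ t in Set.Icc a b, w t * F t) := by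
        rw [← mul_assoc, hK]
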